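/- If the positive integer n is not a Fibonacci number, then 𝒢(n, n) = 𝒢(n, n − 1). -/

import Mathlib

open Nat

def sz (n : ℕ) : ℕ :=
  if h : n = 0 then 0
  else if n - fib (greatestFib n) = 0 then fib (greatestFib n)
  else sz (n - fib (greatestFib n))
termination_by n
decreasing_by
  have h1 : fib (greatestFib n) ≤ n := fib_greatestFib_le n
  have h2 : 0 < fib (greatestFib n) := fib_pos.2 (greatestFib_pos.2 (Nat.pos_of_ne_zero h))
  omega

lemma sz_of_pos {n : ℕ} (h : n ≠ 0) :
    sz n = if n - fib (greatestFib n) = 0 then fib (greatestFib n)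
           else sz (n - fib (greatestFib n)) := by
  rw [sz]; simp [h]

lemma gf_eq {a m : ℕ} (h1 : fib a ≤ m) (h2 : m < fib (a+1)) : greatestFib m = a :=
  le_antisymm (Nat.lt_succ_iff.1 (greatestFib_lt.2 h2)) (le_greatestFib.2 h1)

lemma sz_le : ∀ n, sz n ≤ n := by
  intro n
  induction n using Nat.strong_induction_on with
  | _ n ih =>
    rcases eq_or_ne n 0 with rfl | hn
    · simp [sz]
    rw [sz_of_pos hn]
    have h1 : fib (greatestFib n) ≤ n := fib_greatestFib_le n
    have h2 : 0 < fib (greatestFib n) := fib_pos.2 (greatestFib_pos.2 (Nat.pos_of_ne_zero hn))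
    split
    · exact h1
    · exact le_trans (ih _ (by omega)) (by omega)

lemma sz_pos : ∀ n, 0 < n → 0 < sz n := by
  intro n
  induction n using Nat.strong_induction_on with
  | _ n ih =>
    intro hn
    rw [sz_of_pos hn.ne']
    have h1 : fib (greatestFib n) ≤ n := fib_greatestFib_le n
    have h2 : 0 < fib (greatestFib n) := fib_pos.2 (greatestFib_pos.2 hn)
    split
    · exact h2
    · exact ih _ (by omega) (by omega)

lemma sz_fib : ∀ j, sz (fib j) = fib j := by
  intro j
  match j with
  | 0 => simp [sz]
  | 1 =>
    have hg : greatestFib 1 = 2 := gf_eq (by norm_num) (by norm_num)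
    rw [show fib 1 = 1 from rfl, sz_of_pos one_ne_zero, hg]
    norm_num
  | (j+2) =>
    have hpos : 0 < fib (j+2) := fib_pos.2 (by omega)
    rw [sz_of_pos hpos.ne', greatestFib_fib (by omega)]
    simp

lemma sz_eq_self {n : ℕ} (hn : 0 < n) (h : sz n = n) : n = fib (greatestFib n) := by
  rw [sz_of_pos hn.ne'] at h
  have h1 : fib (greatestFib n) ≤ n := fib_greatestFib_le n
  have h2 : 0 < fib (greatestFib n) := fib_pos.2 (greatestFib_pos.2 hn)
  split at h
  · omega
  · have := sz_le (n - fib (greatestFib n)); omega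

lemma fib_succ_le (a : ℕ) : fib (a+1) ≤ 2 * fib a + 1 := by
  match a with
  | 0 => simp
  | (a+1) =>
    show fib (a+2) ≤ 2 * fib (a+1) + 1
    have h1 : fib (a+2) = fib a + fib (a+1) := fib_add_two
    have h2 : fib a ≤ fib (a+1) := fib_mono (by omega)
    omega

lemma fib_succ_le' {a : ℕ} (h : 1 ≤ Nat.fib a) : Nat.fib (a+1) ≤ 2 * Nat.fib a := by
  match a with
  | 0 => simp at h
  | (b+1) =>
    show Nat.fib (b+2) ≤ 2 * Nat.fib (b+1)
    have h1 : Nat.fib (b+2) = Nat.fib b + Nat.fib (b+1) := Nat.fib_add_two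
    have h2 : Nat.fib b ≤ Nat.fib (b+1) := Nat.fib_mono (by omega)
    omega

/-- Key lemma B: removing `k < sz n` tokens leaves smallest part `≤ 2k`. -/
lemma szB : ∀ n, 0 < n → ∀ k, 1 ≤ k → k < sz n → sz (n - k) ≤ 2 * k := by
  intro n
  induction n using Nat.strong_induction_on with
  | _ n ih =>
    intro hn k hk1 hk
    obtain ⟨g, hgdef⟩ : ∃ g, greatestFib n = g := ⟨_, rfl⟩
    have hg2 : 2 ≤ g := hgdef ▸ le_greatestFib.2 (by simp; omega)
    have hfle : fib g ≤ n := hgdef ▸ fib_greatestFib_le n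
    have hflt : n < fib (g+1) := hgdef ▸ lt_fib_greatestFib_add_one n
    have hfpos : 0 < fib g := fib_pos.2 (by omega)
    by_cases hr : n - fib g = 0
    · -- n = fib g
      have hnf : n = fib g := by omega
      obtain ⟨a, rfl⟩ : ∃ a, g = a + 2 := ⟨g - 2, by omega⟩
      have hrec : fib (a+2) = fib a + fib (a+1) := fib_add_two
      have hrec2 : fib (a+1+1) = fib a + fib (a+1) := fib_add_two
      have hrec3 : fib (a+2+1) = fib (a+1) + fib (a+2) := fib_add_two
      have hszn : sz n = n := by rw [hnf, sz_fib]
      rw [hszn] at hk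
      have hamono : fib a ≤ fib (a+1) := fib_mono (by omega)
      rcases lt_trichotomy k (fib a) with hka | hka | hka
      · -- k < fib a : recurse into fib a - k
        have hg' : greatestFib (n - k) = a + 1 := gf_eq (by omega) (by omega)
        have hnk0 : n - k ≠ 0 := by omega
        rw [sz_of_pos hnk0, hg']
        have hrem : n - k - fib (a+1) = fib a - k := by omega
        rw [hrem, if_neg (by omega)]
        have hfa_lt : fib a < n := by omega
        have := ih (fib a) hfa_lt (by omega) k hk1 (by rw [sz_fib]; omega)
        exact this
      · -- k = fib a : n - k = fib (a+1)
        have hnk : n - k = fib (a+1) := by omega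
        rw [hnk, sz_fib]
        have := fib_succ_le' (a := a) (by omega)
        omega
      · -- k > fib a : n - k is small
        have hs1 := sz_le (n - k)
        have hs2 := fib_succ_le a
        have : n - k ≤ 2 * k := by omega
        exact le_trans hs1 this
    · -- n = fib g + r with r > 0 : sz n = sz r
      obtain ⟨r, hrdef⟩ : ∃ r, n - fib g = r := ⟨_, rfl⟩
      rw [hrdef] at hr
      have hrpos : 0 < r := Nat.pos_of_ne_zero hr
      have hszn : sz n = sz r := by rw [sz_of_pos hn.ne', hgdef, hrdef, if_neg hr]
      rw [hszn] at hk
      have hszr_le : sz r ≤ r := sz_le r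
      have hg' : greatestFib (n - k) = g := gf_eq (by omega) (by omega)
      have hnk0 : n - k ≠ 0 := by omega
      rw [sz_of_pos hnk0, hg']
      have hrem : n - k - fib g = r - k := by omega
      rw [hrem, if_neg (by omega)]
      exact ih r (by omega) hrpos k hk1 hk

/-- Key lemma C: removing the smallest part `sz n < n` leaves smallest part `> 2 * sz n`. -/
lemma szC : ∀ n, 0 < n → sz n < n → 2 * sz n < sz (n - sz n) := by
  intro n
  induction n using Nat.strong_induction_on with
  | _ n ih =>
    intro hn hlt
    obtain ⟨g, hgdef⟩ : ∃ g, greatestFib n = g := ⟨_, rfl⟩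
    have hg2 : 2 ≤ g := hgdef ▸ le_greatestFib.2 (by simp; omega)
    have hfle : fib g ≤ n := hgdef ▸ fib_greatestFib_le n
    have hflt : n < fib (g+1) := hgdef ▸ lt_fib_greatestFib_add_one n
    have hfpos : 0 < fib g := fib_pos.2 (by omega)
    by_cases hr : n - fib g = 0
    · exfalso
      have hnf : n = fib g := by omega
      have : sz n = n := by rw [hnf, sz_fib]
      omega
    · obtain ⟨r, hrdef⟩ : ∃ r, n - fib g = r := ⟨_, rfl⟩
      rw [hrdef] at hr
      have hrpos : 0 < r := Nat.pos_of_ne_zero hr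
      have hszn : sz n = sz r := by rw [sz_of_pos hn.ne', hgdef, hrdef, if_neg hr]
      have hszr_le : sz r ≤ r := sz_le r
      rcases lt_or_eq_of_le hszr_le with hsr | hsr
      · -- sz r < r : recurse
        have hszpos : 0 < sz r := sz_pos r hrpos
        have hg' : greatestFib (n - sz n) = g := by
          rw [hszn]; exact gf_eq (by omega) (by omega)
        have hnk0 : n - sz n ≠ 0 := by omega
        rw [sz_of_pos hnk0, hg', hszn]
        have hrem : n - sz r - fib g = r - sz r := by omega
        rw [hrem, if_neg (by omega)]
        exact ih r (by omega) hrpos hsr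
      · -- sz r = r : r is a Fibonacci number fib j with j ≤ g - 2
        have hrfib : r = fib (greatestFib r) := sz_eq_self hrpos hsr
        obtain ⟨j, hjdef⟩ : ∃ j, greatestFib r = j := ⟨_, rfl⟩
        rw [hjdef] at hrfib
        have hj2 : 2 ≤ j := hjdef ▸ le_greatestFib.2 (by simp; omega)
        have hjg : j ≤ g - 2 := by
          have := greatestFib_sub_fib_greatestFib_le_greatestFib (n := n) hn.ne'
          rw [hgdef, hrdef, hjdef] at this
          exact this
        obtain ⟨a, rfl⟩ : ∃ a, g = a + 2 := ⟨g - 2, by omega⟩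
        have hja : j ≤ a := by omega
        have hmono : fib j ≤ fib a := fib_mono hja
        have hrec : fib (a+2) = fib a + fib (a+1) := fib_add_two
        have hstrict : fib a < fib (a+1) := fib_lt_fib_succ (by omega)
        have hnszn : n - sz n = fib (a+2) := by
          rw [hszn, hsr]; omega
        rw [hnszn, sz_fib]
        rw [hszn, hsr, hrfib]
        omega

/-- The Grundy values of single-heap Fibonacci nim positions `(n, r)`, where `n` is the heap
size and `r` is the maximal number of tokens that may be removed on the next move:
`grundy n r` is the least natural number not of the form
`grundy (n - k) (min (2 * k) (n - k))` for some `k` with `1 ≤ k ≤ min r n`.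
In particular `grundy 0 r = 0` and `grundy n 0 = 0`. -/
noncomputable def grundy (n r : ℕ) : ℕ :=
  sInf {m : ℕ | ∀ k, 1 ≤ k → k ≤ min r n → grundy (n - k) (min (2 * k) (n - k)) ≠ m}
termination_by n
decreasing_by
  have : k ≤ n := le_trans ‹k ≤ min r n› (min_le_right _ _)
  omega

lemma grundy_le : ∀ n r, grundy n r ≤ n := by
  intro n
  induction n using Nat.strong_induction_on with
  | _ n ih =>
    intro r
    rw [grundy]
    apply Nat.sInf_le
    intro k hk1 hk2
    have hkn : k ≤ n := le_trans hk2 (min_le_right _ _)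
    have := ih (n - k) (by omega) (min (2*k) (n-k))
    omega

lemma grundy_eq_zero_iff : ∀ n r, grundy n r = 0 ↔ (n = 0 ∨ r < sz n) := by
  intro n
  induction n using Nat.strong_induction_on with
  | _ n ih =>
    intro r
    rw [grundy, Nat.sInf_eq_zero]
    have hmem : n ∈ {m : ℕ | ∀ k, 1 ≤ k → k ≤ min r n →
        grundy (n - k) (min (2 * k) (n - k)) ≠ m} := by
      intro k hk1 hk2
      have hkn : k ≤ n := le_trans hk2 (min_le_right _ _)
      have := grundy_le (n - k) (min (2*k) (n-k))
      omega
    constructor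
    · rintro (h0 | hemp)
      · by_cases hn : n = 0
        · exact Or.inl hn
        right
        by_contra hr
        push_neg at hr
        have hnpos : 0 < n := Nat.pos_of_ne_zero hn
        have hszpos : 0 < sz n := sz_pos n hnpos
        have hszle : sz n ≤ n := sz_le n
        have h0' := h0 (sz n) hszpos (le_min hr hszle)
        apply h0'
        rw [ih (n - sz n) (by omega) _]
        rcases eq_or_lt_of_le hszle with heq | hlt
        · exact Or.inl (by omega)
        · exact Or.inr (lt_of_le_of_lt (min_le_left _ _) (szC n hnpos hlt))
      · exact absurd (hemp ▸ hmem) (Set.notMem_empty n)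
    · intro h
      left
      intro k hk1 hk2
      have hkn : k ≤ n := le_trans hk2 (min_le_right _ _)
      rw [ne_eq, ih (n - k) (by omega)]
      rcases h with rfl | hr
      · omega
      · push_neg
        have hkr : k ≤ r := le_trans hk2 (min_le_left _ _)
        have hszle : sz n ≤ n := sz_le n
        have hklt : k < sz n := by omega
        constructor
        · omega
        · exact le_min (szB n (by omega) k hk1 hklt) (sz_le _)

/-- If the positive integer `n` is not a Fibonacci number, then `𝒢(n, n) = 𝒢(n, n - 1)`. -/
theorem grundy_self_eq_grundy_start (n : ℕ) (hn : 0 < n) (hfib : ¬ ∃ t, Nat.fib t = n) :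
    grundy n n = grundy n (n - 1) := by
  have hszlt : sz n < n := by
    rcases eq_or_lt_of_le (sz_le n) with heq | h
    · exact absurd ⟨Nat.greatestFib n, (sz_eq_self hn heq).symm⟩ hfib
    · exact h
  have hszpos : 0 < sz n := sz_pos n hn
  have hk0 : grundy (n - sz n) (min (2 * sz n) (n - sz n)) = 0 := by
    rw [grundy_eq_zero_iff]
    exact Or.inr (lt_of_le_of_lt (min_le_left _ _) (szC n hn hszlt))
  rw [grundy, grundy]
  congr 1
  ext m
  simp only [Set.mem_setOf_eq]
  constructor
  · intro h k hk1 hk2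
    exact h k hk1 (le_trans hk2 (by omega))
  · intro h k hk1 hk2
    by_cases hkn : k ≤ n - 1
    · exact h k hk1 (le_min hkn (by omega))
    · have hk : k = n := by
        have : k ≤ n := le_trans hk2 (min_le_right _ _)
        omega
      subst hk
      have hz : grundy (k - k) (min (2 * k) (k - k)) = 0 := by
        rw [grundy_eq_zero_iff]
        exact Or.inl (by omega)
      rw [hz]
      have := h (sz k) hszpos (le_min (by omega) (by omega))
      rw [hk0] at this
      exact this
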